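/- Let L be the generator of a trace-preserving quantum dynamical semigroup on 𝔗(H) in generalized standard form, with operators M (closed, densely defined, generating a contraction semigroup on H) and (L_k) on D(M) satisfying L(ρ) = Σ_k L_k ρ L_k† − Mρ − ρM† for all ρ in the core D_0 := {Σ_{n=1}^N |φ_n⟩⟨ψ_n| : φ_n, ψ_n ∈ D(M), N < ∞}, and Σ_k ‖L_kφ‖² = 2Re⟨φ, Mφ⟩ for φ ∈ D(M). Then there exists an orthonormal basis {e_k} of H such that D_e (the finite span of {e_k}) is a core for M and D_e² (the span of the matrix units |e_k⟩⟨e_ℓ|) is a core for L. -/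

import Mathlib

open Filter Set
open scoped InnerProductSpace ComplexConjugate ComplexOrder Topology ComplexInnerProductSpace

noncomputable section

variable {H T : Type*}

/-- An abstract model of the Banach space `𝔗(H)` of trace-class operators on the Hilbert
space `H`, equipped with the trace norm `‖·‖₁`: a Banach space `T` acting injectively as
bounded operators on `H`, containing all rank-one operators `|x⟩⟨y|` (with
`‖ |x⟩⟨y| ‖₁ = ‖x‖·‖y‖`, their span being dense), together with the trace functional. -/
structure TraceClassModel (H T : Type*) [NormedAddCommGroup H] [InnerProductSpace ℂ H]
    [NormedAddCommGroup T] [NormedSpace ℂ T] where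
  /-- a trace-class operator acts as a bounded operator on `H` -/
  toCLM : T →ₗ[ℂ] (H →L[ℂ] H)
  toCLM_injective : Function.Injective toCLM
  /-- the rank-one operator `|x⟩⟨y| : z ↦ ⟪y, z⟫ • x` as a trace-class operator -/
  rankOne : H → H → T
  toCLM_rankOne : ∀ x y z : H, toCLM (rankOne x y) z = ⟪y, z⟫_ℂ • x
  norm_rankOne : ∀ x y : H, ‖rankOne x y‖ = ‖x‖ * ‖y‖
  dense_span_rankOne :
    Dense ((Submodule.span ℂ (Set.range fun p : H × H => rankOne p.1 p.2) : Submodule ℂ T) : Set T)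
  /-- the trace, a continuous linear functional for the trace norm -/
  trace : T →L[ℂ] ℂ
  trace_rankOne : ∀ x y : H, trace (rankOne x y) = ⟪y, x⟫_ℂ

variable [NormedAddCommGroup H] [InnerProductSpace ℂ H] [CompleteSpace H]
  [NormedAddCommGroup T] [NormedSpace ℂ T] [CompleteSpace T]

/-- The standard criterion for complete positivity of a map on trace-class operators:
`∑_{k,ℓ} ⟪ψ_k, P(|φ_k⟩⟨φ_ℓ|) ψ_ℓ⟫ ≥ 0` for all finite families of vectors. -/
def TraceClassModel.IsCPMap (Mod : TraceClassModel H T) (P : T → T) : Prop :=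
  ∀ (N : ℕ) (φ ψ : Fin N → H),
    0 ≤ ∑ k, ∑ l, ⟪ψ k, Mod.toCLM (P (Mod.rankOne (φ k) (φ l))) (ψ l)⟫_ℂ

/-- A quantum dynamical semigroup: a strongly continuous semigroup of trace-preserving
completely positive linear maps on the trace class. -/
structure QDS {H T : Type*} [NormedAddCommGroup H] [InnerProductSpace ℂ H]
    [NormedAddCommGroup T] [NormedSpace ℂ T] (Mod : TraceClassModel H T) where
  map : ℝ → T →L[ℂ] T
  map_zero : map 0 = ContinuousLinearMap.id ℂ T
  map_add : ∀ s t : ℝ, 0 ≤ s → 0 ≤ t → map (s + t) = (map s).comp (map t)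
  strong_continuity : ∀ ρ : T, ContinuousOn (fun t : ℝ => map t ρ) (Ici 0)
  trace_preserving : ∀ t : ℝ, 0 ≤ t → ∀ ρ : T, Mod.trace (map t ρ) = Mod.trace ρ
  completely_positive : ∀ t : ℝ, 0 ≤ t → Mod.IsCPMap (map t)

variable {Mod : TraceClassModel H T}

/-- `σ = lim_{t→0+} (T^t ρ - ρ)/t` in trace norm. -/
def QDS.HasGenDerivAt (S : QDS Mod) (ρ σ : T) : Prop :=
  Tendsto (fun t : ℝ => (t : ℂ)⁻¹ • (S.map t ρ - ρ)) (𝓝[>] 0) (𝓝 σ)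

/-- The generator of a QDS: the function `L` defined on its maximal domain `Dom`,
consisting of all `ρ` for which `(T^t ρ - ρ)/t` converges in trace norm as `t → 0+`. -/
structure QDS.Generator {H T : Type*} [NormedAddCommGroup H] [InnerProductSpace ℂ H]
    [NormedAddCommGroup T] [NormedSpace ℂ T] {Mod : TraceClassModel H T} (S : QDS Mod) where
  Dom : Set T
  L : T → T
  mem_dom_iff : ∀ ρ : T, ρ ∈ Dom ↔ ∃ σ, S.HasGenDerivAt ρ σ
  hasGenDerivAt : ∀ ρ ∈ Dom, S.HasGenDerivAt ρ (L ρ)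

/-- `D` is a core for the operator `L` with domain `Dom`: `D ⊆ Dom` and `D` is dense in
`Dom` with respect to the graph norm `‖ρ‖ + ‖L ρ‖`. -/
def IsCoreFor {E : Type*} [NormedAddCommGroup E] (L : E → E) (Dom D : Set E) : Prop :=
  D ⊆ Dom ∧ ∀ ρ ∈ Dom, ∀ ε : ℝ, 0 < ε → ∃ σ ∈ D, ‖ρ - σ‖ + ‖L ρ - L σ‖ < ε

/-- `e` is an orthonormal basis of `H`. -/
def IsONBasis {ι : Type*} (e : ι → H) : Prop :=
  Orthonormal ℂ e ∧ Dense ((Submodule.span ℂ (Set.range e) : Submodule ℂ H) : Set H)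

/-- `D_e²`: the linear span of the matrix units `|e_k⟩⟨e_ℓ|` of the basis `e`. -/
def TraceClassModel.De2 (Mod : TraceClassModel H T) {ι : Type*} (e : ι → H) : Set T :=
  (Submodule.span ℂ (Set.range fun p : ι × ι => Mod.rankOne (e p.1) (e p.2)) : Submodule ℂ T)

/-- The QDS is matrix normal with respect to the orthonormal basis `e`:
`D_e²` is a core for the generator. -/
def QDS.Generator.MatrixNormal {S : QDS Mod} (G : S.Generator) {ι : Type*} (e : ι → H) : Prop :=
  IsONBasis e ∧ IsCoreFor G.L G.Dom (Mod.De2 e)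

/-- `M` (a densely defined unbounded operator on `H`) generates a strongly continuous
contraction semigroup `C t = e^{-tM}` on `H`, whose generator `-M` has domain exactly
`M.domain`. -/
def GeneratesContractionSemigroupPMap (M : H →ₗ.[ℂ] H) : Prop :=
  ∃ C : ℝ → H →L[ℂ] H,
    C 0 = ContinuousLinearMap.id ℂ H ∧
    (∀ s t : ℝ, 0 ≤ s → 0 ≤ t → C (s + t) = (C s).comp (C t)) ∧
    (∀ t : ℝ, 0 ≤ t → ‖C t‖ ≤ 1) ∧
    (∀ ψ : H, ContinuousOn (fun t : ℝ => C t ψ) (Ici 0)) ∧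
    (∀ ψ : H, ψ ∈ M.domain ↔
      ∃ η, Tendsto (fun t : ℝ => (t : ℂ)⁻¹ • (C t ψ - ψ)) (𝓝[>] 0) (𝓝 η)) ∧
    (∀ φ : M.domain,
      Tendsto (fun t : ℝ => (t : ℂ)⁻¹ • (C t (φ : H) - (φ : H))) (𝓝[>] 0) (𝓝 (-(M φ))))

/-- `Mf : H → H`, restricted to `D`, generates a strongly continuous contraction semigroup
`C t = e^{-tMf}` on `H`, whose generator `-Mf` has domain exactly `D`. -/
def GeneratesContractionSemigroupOn (Mf : H → H) (D : Set H) : Prop :=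
  ∃ C : ℝ → H →L[ℂ] H,
    C 0 = ContinuousLinearMap.id ℂ H ∧
    (∀ s t : ℝ, 0 ≤ s → 0 ≤ t → C (s + t) = (C s).comp (C t)) ∧
    (∀ t : ℝ, 0 ≤ t → ‖C t‖ ≤ 1) ∧
    (∀ ψ : H, ContinuousOn (fun t : ℝ => C t ψ) (Ici 0)) ∧
    (∀ ψ : H, ψ ∈ D ↔
      ∃ η, Tendsto (fun t : ℝ => (t : ℂ)⁻¹ • (C t ψ - ψ)) (𝓝[>] 0) (𝓝 η)) ∧
    (∀ ψ ∈ D, Tendsto (fun t : ℝ => (t : ℂ)⁻¹ • (C t ψ - ψ)) (𝓝[>] 0) (𝓝 (-Mf ψ)))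


/-! ### Auxiliary lemmas -/

section Helpers

variable {Mod : TraceClassModel H T}

theorem TraceClassModel.rankOne_sub_left (Mod : TraceClassModel H T) (x x' y : H) :
    Mod.rankOne (x - x') y = Mod.rankOne x y - Mod.rankOne x' y := by
  apply Mod.toCLM_injective
  ext z
  simp [Mod.toCLM_rankOne, smul_sub, map_sub]

theorem TraceClassModel.rankOne_add_left (Mod : TraceClassModel H T) (x x' y : H) :
    Mod.rankOne (x + x') y = Mod.rankOne x y + Mod.rankOne x' y := by
  apply Mod.toCLM_injective
  ext z
  simp [Mod.toCLM_rankOne, smul_add, map_add]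

theorem TraceClassModel.rankOne_smul_left (Mod : TraceClassModel H T) (c : ℂ) (x y : H) :
    Mod.rankOne (c • x) y = c • Mod.rankOne x y := by
  apply Mod.toCLM_injective
  ext z
  simp only [map_smul, ContinuousLinearMap.smul_apply, Mod.toCLM_rankOne]
  rw [smul_comm]

theorem TraceClassModel.rankOne_sub_right (Mod : TraceClassModel H T) (x y y' : H) :
    Mod.rankOne x (y - y') = Mod.rankOne x y - Mod.rankOne x y' := by
  apply Mod.toCLM_injective
  ext z
  simp [Mod.toCLM_rankOne, map_sub, inner_sub_left, sub_smul]

theorem TraceClassModel.rankOne_add_right (Mod : TraceClassModel H T) (x y y' : H) :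
    Mod.rankOne x (y + y') = Mod.rankOne x y + Mod.rankOne x y' := by
  apply Mod.toCLM_injective
  ext z
  simp [Mod.toCLM_rankOne, map_add, inner_add_left, add_smul]

theorem TraceClassModel.rankOne_smul_right (Mod : TraceClassModel H T) (c : ℂ) (x y : H) :
    Mod.rankOne x (c • y) = (starRingEnd ℂ c) • Mod.rankOne x y := by
  apply Mod.toCLM_injective
  ext z
  simp [Mod.toCLM_rankOne, map_smul, inner_smul_left, mul_smul]
  exact smul_comm _ _ _

theorem TraceClassModel.rankOne_zero_right (Mod : TraceClassModel H T) (x : H) :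
    Mod.rankOne x 0 = 0 := by
  apply Mod.toCLM_injective
  ext z
  simp [Mod.toCLM_rankOne]

/-- rank-one operators with entries in the span of a family lie in the span of the
matrix units of that family. -/
theorem TraceClassModel.rankOne_mem_span (Mod : TraceClassModel H T) {ι' : Type*} (e : ι' → H)
    {x y : H} (hx : x ∈ Submodule.span ℂ (Set.range e))
    (hy : y ∈ Submodule.span ℂ (Set.range e)) :
    Mod.rankOne x y ∈
      Submodule.span ℂ (Set.range fun p : ι' × ι' => Mod.rankOne (e p.1) (e p.2)) := by
  induction hx using Submodule.span_induction with
  | mem x hxm =>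
    obtain ⟨i, rfl⟩ := hxm
    induction hy using Submodule.span_induction with
    | mem y hym =>
      obtain ⟨j, rfl⟩ := hym
      exact Submodule.subset_span ⟨(i, j), rfl⟩
    | zero => simp [Mod.rankOne_zero_right]
    | add a b _ _ iha ihb =>
      rw [Mod.rankOne_add_right]
      exact Submodule.add_mem _ iha ihb
    | smul c a _ ih =>
      rw [Mod.rankOne_smul_right]
      exact Submodule.smul_mem _ _ ih
  | zero =>
    have : Mod.rankOne (0 : H) y = 0 := by
      apply Mod.toCLM_injective; ext z; simp [Mod.toCLM_rankOne]
    simp [this]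
  | add a b _ _ iha ihb =>
    rw [Mod.rankOne_add_left]
    exact Submodule.add_mem _ iha ihb
  | smul c a _ ih =>
    rw [Mod.rankOne_smul_left]
    exact Submodule.smul_mem _ _ ih

/-- Young-type inequality for sums of products of square-summable sequences. -/
theorem tsum_mul_le_young {a b : ℕ → ℝ} (ha0 : ∀ k, 0 ≤ a k) (hb0 : ∀ k, 0 ≤ b k)
    (hA : Summable fun k => a k ^ 2) (hB : Summable fun k => b k ^ 2)
    {t : ℝ} (ht : 0 < t) :
    Summable (fun k => a k * b k) ∧
      ∑' k, a k * b k ≤ (t * ∑' k, a k ^ 2 + t⁻¹ * ∑' k, b k ^ 2) / 2 := by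
  have htinv : 0 < t⁻¹ := inv_pos.mpr ht
  have key : ∀ k, a k * b k ≤ (t * a k ^ 2 + t⁻¹ * b k ^ 2) / 2 := by
    intro k
    have h1 : 0 ≤ t⁻¹ * (t * a k - b k) ^ 2 := mul_nonneg htinv.le (sq_nonneg _)
    have h2 : t * t⁻¹ = 1 := mul_inv_cancel₀ ht.ne'
    nlinarith [sq_nonneg (t * a k - b k)]
  have hsum2 : Summable fun k => (t * a k ^ 2 + t⁻¹ * b k ^ 2) / 2 :=
    (((hA.mul_left t).add (hB.mul_left t⁻¹)).div_const 2)
  have hsum : Summable fun k => a k * b k :=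
    Summable.of_nonneg_of_le (fun k => mul_nonneg (ha0 k) (hb0 k)) key hsum2
  refine ⟨hsum, ?_⟩
  calc ∑' k, a k * b k ≤ ∑' k, (t * a k ^ 2 + t⁻¹ * b k ^ 2) / 2 :=
        Summable.tsum_le_tsum key hsum hsum2
    _ = (t * ∑' k, a k ^ 2 + t⁻¹ * ∑' k, b k ^ 2) / 2 := by
        rw [tsum_div_const, Summable.tsum_add (hA.mul_left t) (hB.mul_left t⁻¹), tsum_mul_left,
          tsum_mul_left]

end Helpers
set_option maxHeartbeats 1000000 in
/-- Proposition 4: if the generator `L` of a trace-preserving QDS is in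
generalized standard form with operators `M` and `(L_k)`, then there exists an orthonormal
basis `{e_k}` of `H` such that `D_e` is a core for `M` and `D_e²` is a core for `L`. -/
theorem exists_basis_core_of_generalized_standard_form [TopologicalSpace.SeparableSpace H]
    (S : QDS Mod) (G : S.Generator)
    (M : H →ₗ.[ℂ] H) (hdense : Dense (M.domain : Set H)) (hclosed : M.IsClosed)
    (hgen : GeneratesContractionSemigroupPMap M)
    (Lk : ℕ → M.domain →ₗ[ℂ] H)
    (hrb : ∀ k, ∃ a b : ℝ, ∀ φ : M.domain, ‖Lk k φ‖ ≤ a * ‖(φ : H)‖ + b * ‖M φ‖)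
    (hSumm : ∀ φ ψ : M.domain, Summable fun k => Mod.rankOne (Lk k φ) (Lk k ψ))
    (hform : ∀ (N : ℕ) (φ ψ : Fin N → M.domain),
      (∑ n, Mod.rankOne (φ n) (ψ n)) ∈ G.Dom ∧
      G.L (∑ n, Mod.rankOne (φ n) (ψ n)) =
        ∑ n, ((∑' k, Mod.rankOne (Lk k (φ n)) (Lk k (ψ n)))
          - Mod.rankOne (M (φ n)) (ψ n) - Mod.rankOne (φ n) (M (ψ n))))
    (hcore : IsCoreFor G.L G.Dom
      {ρ : T | ∃ (N : ℕ) (φ ψ : Fin N → M.domain), ρ = ∑ n, Mod.rankOne (φ n) (ψ n)})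
    (hnormsq : ∀ φ : M.domain, (Summable fun k => ‖Lk k φ‖ ^ 2) ∧
      ∑' k, ‖Lk k φ‖ ^ 2 = 2 * (⟪(φ : H), M φ⟫_ℂ).re) :
    ∃ (ι : Type) (_ : Countable ι) (e : ι → H),
      IsONBasis e ∧
      -- `D_e ⊆ D(M)` and `D_e` is a core for `M` (dense in `D(M)` in graph norm)
      Submodule.span ℂ (Set.range e) ≤ M.domain ∧
      (∀ (φ : M.domain) (ε : ℝ), 0 < ε → ∃ x : M.domain,
        (x : H) ∈ Submodule.span ℂ (Set.range e) ∧
        ‖(φ : H) - (x : H)‖ ≤ ε ∧ ‖M φ - M x‖ ≤ ε) ∧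
      -- `D_e²` is a core for `L`
      IsCoreFor G.L G.Dom (Mod.De2 e) := by
  classical
  -- ### Step 1: a countable graph-norm dense sequence in `M.domain`
  haveI hsc : SecondCountableTopology (H × H) := UniformSpace.secondCountable_of_separable _
  set Gset : Set (H × H) := Set.range (fun φ : M.domain => ((φ : H), M φ)) with hGset
  haveI : Nonempty Gset := ⟨⟨_, ⟨0, rfl⟩⟩⟩
  obtain ⟨u, hu⟩ := TopologicalSpace.exists_dense_seq Gset
  choose v hv using fun n => (u n).2
  have happrox : ∀ (φ : M.domain) (δ : ℝ), 0 < δ →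
      ∃ n, ‖(φ : H) - (v n : H)‖ ≤ δ ∧ ‖M φ - M (v n)‖ ≤ δ := by
    intro φ δ hδ
    have hm : (((φ : H), M φ)) ∈ Gset := ⟨φ, rfl⟩
    obtain ⟨n, hn⟩ := Metric.denseRange_iff.mp hu ⟨_, hm⟩ δ hδ
    rw [Subtype.dist_eq, ← hv n, Prod.dist_eq] at hn
    obtain ⟨h1, h2⟩ := max_lt_iff.mp hn
    rw [dist_eq_norm] at h1 h2
    exact ⟨n, h1.le, h2.le⟩
  -- ### Step 2: Gram–Schmidt orthonormalization
  set f : ℕ → H := fun n => (v n : H) with hfdef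
  have hf_mem : ∀ n, f n ∈ M.domain := fun n => (v n).2
  set e : {n : ℕ | InnerProductSpace.gramSchmidtNormed ℂ f n ≠ 0} → H :=
    fun i => InnerProductSpace.gramSchmidtNormed ℂ f i with hedef
  have horth : Orthonormal ℂ e := InnerProductSpace.gramSchmidtNormed_orthonormal' (𝕜 := ℂ) f
  have hspan : Submodule.span ℂ (Set.range e) = Submodule.span ℂ (Set.range f) := by
    apply le_antisymm
    · apply Submodule.span_le.mpr
      rintro _ ⟨i, rfl⟩
      rw [← InnerProductSpace.span_gramSchmidt ℂ f, ← InnerProductSpace.span_gramSchmidtNormed_range (𝕜 := ℂ) f]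
      exact Submodule.subset_span ⟨i, rfl⟩
    · rw [← InnerProductSpace.span_gramSchmidt ℂ f, ← InnerProductSpace.span_gramSchmidtNormed_range (𝕜 := ℂ) f]
      apply Submodule.span_le.mpr
      rintro _ ⟨n, rfl⟩
      by_cases h : InnerProductSpace.gramSchmidtNormed ℂ f n = 0
      · rw [h]; exact Submodule.zero_mem _
      · exact Submodule.subset_span ⟨⟨n, h⟩, rfl⟩
  have hgs_mem : ∀ n, InnerProductSpace.gramSchmidt ℂ f n ∈ M.domain := by
    intro n
    have h2 : Submodule.span ℂ (f '' Iic n) ≤ M.domain :=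
      Submodule.span_le.mpr (by rintro _ ⟨m, _, rfl⟩; exact hf_mem m)
    exact h2 (InnerProductSpace.gramSchmidt_mem_span ℂ f (le_refl n))
  have he_mem : ∀ i, e i ∈ M.domain := by
    intro i
    show InnerProductSpace.gramSchmidtNormed ℂ f ↑i ∈ M.domain
    simp only [InnerProductSpace.gramSchmidtNormed]
    exact Submodule.smul_mem _ _ (hgs_mem i)
  have hle : Submodule.span ℂ (Set.range e) ≤ M.domain := by
    rw [hspan]
    exact Submodule.span_le.mpr (range_subset_iff.mpr hf_mem)
  have hDensef : Dense (Submodule.span ℂ (Set.range f) : Set H) := by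
    intro z
    have hsub : (M.domain : Set H) ⊆ closure (Submodule.span ℂ (Set.range f) : Set H) := by
      intro w hw
      rw [Metric.mem_closure_iff]
      intro ε' hε'
      obtain ⟨n, h1, _⟩ := happrox ⟨w, hw⟩ (ε' / 2) (by positivity)
      refine ⟨f n, Submodule.subset_span ⟨n, rfl⟩, ?_⟩
      rw [dist_eq_norm]
      calc ‖w - f n‖ ≤ ε' / 2 := h1
        _ < ε' := by linarith
    exact closure_minimal hsub isClosed_closure (hdense z)
  have hMcore : ∀ (φ : M.domain) (δ : ℝ), 0 < δ → ∃ x : M.domain,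
      (x : H) ∈ Submodule.span ℂ (Set.range e) ∧
      ‖(φ : H) - (x : H)‖ ≤ δ ∧ ‖M φ - M x‖ ≤ δ := by
    intro φ δ hδ
    obtain ⟨n, h1, h2⟩ := happrox φ δ hδ
    exact ⟨v n, by rw [hspan]; exact Submodule.subset_span ⟨n, rfl⟩, h1, h2⟩
  -- ### Step 3: quantitative estimates
  have hSigLe : ∀ w : M.domain, ∑' k, ‖Lk k w‖ ^ 2 ≤ 2 * (‖(w : H)‖ * ‖M w‖) := by
    intro w
    rw [(hnormsq w).2]
    have h1 : (⟪(w : H), M w⟫_ℂ).re ≤ ‖(w : H)‖ * ‖M w‖ := by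
      refine le_trans (Complex.re_le_norm _) ?_
      have := norm_inner_le_norm (𝕜 := ℂ) (w : H) (M w)
      simpa using this
    linarith
  have hmulbound : ∀ (a b : M.domain) (t : ℝ), 0 < t →
      ‖∑' k, Mod.rankOne (Lk k a) (Lk k b)‖ ≤
        (t * ∑' k, ‖Lk k a‖ ^ 2 + t⁻¹ * ∑' k, ‖Lk k b‖ ^ 2) / 2 := by
    intro a b t ht
    obtain ⟨hs, hle'⟩ := tsum_mul_le_young (fun k => norm_nonneg (Lk k a))
      (fun k => norm_nonneg (Lk k b)) (hnormsq a).1 (hnormsq b).1 ht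
    have h2 : Summable fun k => ‖Mod.rankOne (Lk k a) (Lk k b)‖ := by
      simpa [Mod.norm_rankOne] using hs
    calc ‖∑' k, Mod.rankOne (Lk k a) (Lk k b)‖
        ≤ ∑' k, ‖Mod.rankOne (Lk k a) (Lk k b)‖ := norm_tsum_le_tsum_norm h2
      _ = ∑' k, ‖Lk k a‖ * ‖Lk k b‖ := by simp [Mod.norm_rankOne]
      _ ≤ _ := hle'
  have hro : ∀ a b c d : H, ‖Mod.rankOne a b - Mod.rankOne c d‖ ≤
      ‖a - c‖ * ‖b‖ + ‖c‖ * ‖b - d‖ := by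
    intro a b c d
    have h1 : Mod.rankOne a b - Mod.rankOne c d
        = Mod.rankOne (a - c) b + Mod.rankOne c (b - d) := by
      rw [Mod.rankOne_sub_left, Mod.rankOne_sub_right]; abel
    rw [h1]
    refine le_trans (norm_add_le _ _) ?_
    rw [Mod.norm_rankOne, Mod.norm_rankOne]
  -- the key per-pair approximation
  have happrox2 : ∀ (φ ψ : M.domain) (ε' : ℝ), 0 < ε' → ∃ x y : M.domain,
      (x : H) ∈ Submodule.span ℂ (Set.range e) ∧ (y : H) ∈ Submodule.span ℂ (Set.range e) ∧
      ‖Mod.rankOne φ ψ - Mod.rankOne x y‖ ≤ ε' ∧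
      ‖((∑' k, Mod.rankOne (Lk k φ) (Lk k ψ)) - Mod.rankOne (M φ) ψ - Mod.rankOne φ (M ψ))
        - ((∑' k, Mod.rankOne (Lk k x) (Lk k y)) - Mod.rankOne (M x) y
            - Mod.rankOne x (M y))‖ ≤ ε' := by
    intro φ ψ ε' hε'
    set K : ℝ := ‖(φ : H)‖ + ‖(ψ : H)‖ + ‖M φ‖ + ‖M ψ‖ + (‖(φ : H)‖ + 1) * (‖M φ‖ + 1)
      + ‖(ψ : H)‖ * ‖M ψ‖ + 6 with hK
    have hKpos : 0 < K := by positivity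
    set δ : ℝ := min 1 (ε' / K) with hδdef
    have hδpos : 0 < δ := lt_min one_pos (by positivity)
    have hδ1 : δ ≤ 1 := min_le_left _ _
    have hδK : δ * K ≤ ε' := by
      have h1 : δ ≤ ε' / K := min_le_right _ _
      calc δ * K ≤ (ε' / K) * K := mul_le_mul_of_nonneg_right h1 hKpos.le
        _ = ε' := by field_simp
    obtain ⟨x, hxE, hx1, hx2⟩ := hMcore φ δ hδpos
    obtain ⟨y, hyE, hy1, hy2⟩ := hMcore ψ δ hδpos
    have hxb : ‖(x : H)‖ ≤ ‖(φ : H)‖ + 1 := by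
      have h := norm_sub_norm_le (x : H) (φ : H)
      rw [norm_sub_rev] at h
      linarith
    have hMxb : ‖M x‖ ≤ ‖M φ‖ + 1 := by
      have h := norm_sub_norm_le (M x) (M φ)
      rw [norm_sub_rev] at h
      linarith
    have hcφx : ((φ - x : M.domain) : H) = (φ : H) - (x : H) := rfl
    have hcψy : ((ψ - y : M.domain) : H) = (ψ : H) - (y : H) := rfl
    have hSfx : ∑' k, ‖Lk k (φ - x)‖ ^ 2 ≤ 2 * (δ * δ) := by
      have h0 := hSigLe (φ - x)
      rw [M.map_sub, hcφx] at h0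
      have hmul : ‖(φ : H) - (x : H)‖ * ‖M φ - M x‖ ≤ δ * δ :=
        mul_le_mul hx1 hx2 (norm_nonneg _) hδpos.le
      linarith
    have hSpy : ∑' k, ‖Lk k (ψ - y)‖ ^ 2 ≤ 2 * (δ * δ) := by
      have h0 := hSigLe (ψ - y)
      rw [M.map_sub, hcψy] at h0
      have hmul : ‖(ψ : H) - (y : H)‖ * ‖M ψ - M y‖ ≤ δ * δ :=
        mul_le_mul hy1 hy2 (norm_nonneg _) hδpos.le
      linarith
    have hSx : ∑' k, ‖Lk k x‖ ^ 2 ≤ 2 * ((‖(φ : H)‖ + 1) * (‖M φ‖ + 1)) := by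
      have h0 := hSigLe x
      have hmul : ‖(x : H)‖ * ‖M x‖ ≤ (‖(φ : H)‖ + 1) * (‖M φ‖ + 1) :=
        mul_le_mul hxb hMxb (norm_nonneg _) (by positivity)
      linarith
    have hδinv : δ⁻¹ * (2 * (δ * δ)) = 2 * δ := by field_simp
    have hT1 : ‖∑' k, Mod.rankOne (Lk k (φ - x)) (Lk k ψ)‖ ≤
        δ + δ * (‖(ψ : H)‖ * ‖M ψ‖) := by
      have h0 := hmulbound (φ - x) ψ δ⁻¹ (inv_pos.mpr hδpos)
      have hmono1 : δ⁻¹ * ∑' k, ‖Lk k (φ - x)‖ ^ 2 ≤ 2 * δ := by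
        rw [← hδinv]
        exact mul_le_mul_of_nonneg_left hSfx (inv_nonneg.mpr hδpos.le)
      have hmono2 : (δ⁻¹)⁻¹ * ∑' k, ‖Lk k ψ‖ ^ 2 ≤ δ * (2 * (‖(ψ : H)‖ * ‖M ψ‖)) := by
        rw [inv_inv]
        exact mul_le_mul_of_nonneg_left (hSigLe ψ) hδpos.le
      linarith
    have hT2 : ‖∑' k, Mod.rankOne (Lk k x) (Lk k (ψ - y))‖ ≤
        δ * ((‖(φ : H)‖ + 1) * (‖M φ‖ + 1)) + δ := by
      have h0 := hmulbound x (ψ - y) δ hδpos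
      have hmono1 : δ * ∑' k, ‖Lk k x‖ ^ 2 ≤ δ * (2 * ((‖(φ : H)‖ + 1) * (‖M φ‖ + 1))) :=
        mul_le_mul_of_nonneg_left hSx hδpos.le
      have hmono2 : δ⁻¹ * ∑' k, ‖Lk k (ψ - y)‖ ^ 2 ≤ 2 * δ := by
        rw [← hδinv]
        exact mul_le_mul_of_nonneg_left hSpy (inv_nonneg.mpr hδpos.le)
      linarith
    have hsplit : (∑' k, Mod.rankOne (Lk k φ) (Lk k ψ))
          - ∑' k, Mod.rankOne (Lk k x) (Lk k y)
        = (∑' k, Mod.rankOne (Lk k (φ - x)) (Lk k ψ))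
          + ∑' k, Mod.rankOne (Lk k x) (Lk k (ψ - y)) := by
      rw [← Summable.tsum_sub (hSumm φ ψ) (hSumm x y), ← Summable.tsum_add (hSumm (φ - x) ψ) (hSumm x (ψ - y))]
      apply tsum_congr
      intro k
      rw [map_sub, map_sub, Mod.rankOne_sub_left, Mod.rankOne_sub_right]
      abel
    -- bound on the `rankOne` differences
    have hB : ‖Mod.rankOne (M φ) ψ - Mod.rankOne (M x) y‖ ≤
        δ * ‖(ψ : H)‖ + (‖M φ‖ + 1) * δ := by
      refine le_trans (hro _ _ _ _) ?_
      have h1 : ‖M φ - M x‖ * ‖(ψ : H)‖ ≤ δ * ‖(ψ : H)‖ :=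
        mul_le_mul_of_nonneg_right hx2 (norm_nonneg _)
      have h2 : ‖M x‖ * ‖(ψ : H) - (y : H)‖ ≤ (‖M φ‖ + 1) * δ :=
        mul_le_mul hMxb hy1 (norm_nonneg _) (by positivity)
      linarith
    have hC : ‖Mod.rankOne (φ : H) (M ψ) - Mod.rankOne (x : H) (M y)‖ ≤
        δ * ‖M ψ‖ + (‖(φ : H)‖ + 1) * δ := by
      refine le_trans (hro _ _ _ _) ?_
      have h1 : ‖(φ : H) - (x : H)‖ * ‖M ψ‖ ≤ δ * ‖M ψ‖ :=
        mul_le_mul_of_nonneg_right hx1 (norm_nonneg _)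
      have h2 : ‖(x : H)‖ * ‖M ψ - M y‖ ≤ (‖(φ : H)‖ + 1) * δ :=
        mul_le_mul hxb hy2 (norm_nonneg _) (by positivity)
      linarith
    have hA : ‖Mod.rankOne (φ : H) (ψ : H) - Mod.rankOne (x : H) (y : H)‖ ≤
        δ * ‖(ψ : H)‖ + (‖(φ : H)‖ + 1) * δ := by
      refine le_trans (hro _ _ _ _) ?_
      have h1 : ‖(φ : H) - (x : H)‖ * ‖(ψ : H)‖ ≤ δ * ‖(ψ : H)‖ :=
        mul_le_mul_of_nonneg_right hx1 (norm_nonneg _)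
      have h2 : ‖(x : H)‖ * ‖(ψ : H) - (y : H)‖ ≤ (‖(φ : H)‖ + 1) * δ :=
        mul_le_mul hxb hy1 (norm_nonneg _) (by positivity)
      linarith
    refine ⟨x, y, hxE, hyE, ?_, ?_⟩
    · refine le_trans hA (le_trans ?_ hδK)
      have hle1 : ‖(ψ : H)‖ + (‖(φ : H)‖ + 1) ≤ K := by
        rw [hK]
        have n1 := mul_nonneg (norm_nonneg (ψ : H)) (norm_nonneg (M ψ))
        have n2 := mul_nonneg (by positivity : (0:ℝ) ≤ ‖(φ : H)‖ + 1)
          (by positivity : (0:ℝ) ≤ ‖M φ‖ + 1)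
        have n3 := norm_nonneg (M φ)
        have n4 := norm_nonneg (M ψ)
        linarith
      calc δ * ‖(ψ : H)‖ + (‖(φ : H)‖ + 1) * δ
          = δ * (‖(ψ : H)‖ + (‖(φ : H)‖ + 1)) := by ring
        _ ≤ δ * K := mul_le_mul_of_nonneg_left hle1 hδpos.le
    · have hdecomp : ((∑' k, Mod.rankOne (Lk k φ) (Lk k ψ)) - Mod.rankOne (M φ) ψ
            - Mod.rankOne (φ : H) (M ψ))
          - ((∑' k, Mod.rankOne (Lk k x) (Lk k y)) - Mod.rankOne (M x) y
            - Mod.rankOne (x : H) (M y))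
        = ((∑' k, Mod.rankOne (Lk k φ) (Lk k ψ)) - ∑' k, Mod.rankOne (Lk k x) (Lk k y))
          - (Mod.rankOne (M φ) ψ - Mod.rankOne (M x) y)
          - (Mod.rankOne (φ : H) (M ψ) - Mod.rankOne (x : H) (M y)) := by abel
      rw [hdecomp, hsplit]
      have htri : ‖(∑' k, Mod.rankOne (Lk k (φ - x)) (Lk k ψ))
            + (∑' k, Mod.rankOne (Lk k x) (Lk k (ψ - y)))
          - (Mod.rankOne (M φ) ψ - Mod.rankOne (M x) y)
          - (Mod.rankOne (φ : H) (M ψ) - Mod.rankOne (x : H) (M y))‖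
          ≤ ‖∑' k, Mod.rankOne (Lk k (φ - x)) (Lk k ψ)‖
            + ‖∑' k, Mod.rankOne (Lk k x) (Lk k (ψ - y))‖
            + ‖Mod.rankOne (M φ) ψ - Mod.rankOne (M x) y‖
            + ‖Mod.rankOne (φ : H) (M ψ) - Mod.rankOne (x : H) (M y)‖ := by
        refine le_trans (norm_sub_le _ _) ?_
        refine add_le_add ?_ le_rfl
        refine le_trans (norm_sub_le _ _) ?_
        exact add_le_add (norm_add_le _ _) le_rfl
      refine le_trans htri ?_
      refine le_trans (add_le_add (add_le_add (add_le_add hT1 hT2) hB) hC) (le_trans ?_ hδK)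
      have hC0 : 2 + ‖(ψ : H)‖ * ‖M ψ‖ + (‖(φ : H)‖ + 1) * (‖M φ‖ + 1) + ‖(ψ : H)‖
          + (‖M φ‖ + 1) + ‖M ψ‖ + (‖(φ : H)‖ + 1) ≤ K := by
        rw [hK]
        linarith
      calc δ + δ * (‖(ψ : H)‖ * ‖M ψ‖) + (δ * ((‖(φ : H)‖ + 1) * (‖M φ‖ + 1)) + δ)
            + (δ * ‖(ψ : H)‖ + (‖M φ‖ + 1) * δ) + (δ * ‖M ψ‖ + (‖(φ : H)‖ + 1) * δ)
          = δ * (2 + ‖(ψ : H)‖ * ‖M ψ‖ + (‖(φ : H)‖ + 1) * (‖M φ‖ + 1) + ‖(ψ : H)‖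
            + (‖M φ‖ + 1) + ‖M ψ‖ + (‖(φ : H)‖ + 1)) := by ring
        _ ≤ δ * K := mul_le_mul_of_nonneg_left hC0 hδpos.le
  -- ### Step 4: the domain is closed under the vector space operations
  have hDadd : ∀ ρ₁ ρ₂, ρ₁ ∈ G.Dom → ρ₂ ∈ G.Dom → ρ₁ + ρ₂ ∈ G.Dom := by
    intro ρ₁ ρ₂ h1 h2
    obtain ⟨σ₁, hσ₁⟩ := (G.mem_dom_iff ρ₁).mp h1
    obtain ⟨σ₂, hσ₂⟩ := (G.mem_dom_iff ρ₂).mp h2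
    refine (G.mem_dom_iff _).mpr ⟨σ₁ + σ₂, ?_⟩
    have heq : (fun t : ℝ => (t : ℂ)⁻¹ • (S.map t (ρ₁ + ρ₂) - (ρ₁ + ρ₂))) =
        fun t : ℝ => (t : ℂ)⁻¹ • (S.map t ρ₁ - ρ₁) + (t : ℂ)⁻¹ • (S.map t ρ₂ - ρ₂) := by
      funext t
      rw [map_add, add_sub_add_comm, smul_add]
    show Tendsto (fun t : ℝ => (t : ℂ)⁻¹ • (S.map t (ρ₁ + ρ₂) - (ρ₁ + ρ₂))) (𝓝[>] 0)
      (𝓝 (σ₁ + σ₂))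
    rw [heq]
    exact Tendsto.add hσ₁ hσ₂
  have hDsmul : ∀ (c : ℂ) ρ₁, ρ₁ ∈ G.Dom → c • ρ₁ ∈ G.Dom := by
    intro c ρ₁ h1
    obtain ⟨σ₁, hσ₁⟩ := (G.mem_dom_iff ρ₁).mp h1
    refine (G.mem_dom_iff _).mpr ⟨c • σ₁, ?_⟩
    have heq : (fun t : ℝ => (t : ℂ)⁻¹ • (S.map t (c • ρ₁) - c • ρ₁)) =
        fun t : ℝ => c • ((t : ℂ)⁻¹ • (S.map t ρ₁ - ρ₁)) := by
      funext t
      rw [map_smul, ← smul_sub, smul_comm]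
    show Tendsto (fun t : ℝ => (t : ℂ)⁻¹ • (S.map t (c • ρ₁) - c • ρ₁)) (𝓝[>] 0) (𝓝 (c • σ₁))
    rw [heq]
    exact Tendsto.const_smul hσ₁ c
  have hDomDe2 : Mod.De2 e ⊆ G.Dom := by
    intro ρ hρ
    simp only [TraceClassModel.De2, SetLike.mem_coe] at hρ
    induction hρ using Submodule.span_induction with
    | mem ρ h =>
      obtain ⟨⟨i, j⟩, rfl⟩ := h
      have h1 := (hform 1 (fun _ => ⟨e i, he_mem i⟩) (fun _ => ⟨e j, he_mem j⟩)).1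
      simpa using h1
    | zero =>
      have h1 := (hform 0 (fun n => n.elim0) (fun n => n.elim0)).1
      simpa using h1
    | add a b _ _ iha ihb => exact hDadd a b iha ihb
    | smul c a _ ih => exact hDsmul c a ih
  -- ### Step 5: conclusion
  refine ⟨{n : ℕ | InnerProductSpace.gramSchmidtNormed ℂ f n ≠ 0}, inferInstance, e,
    ⟨horth, by rw [hspan]; exact hDensef⟩, hle, hMcore, hDomDe2, ?_⟩
  intro ρ hρ ε hε
  obtain ⟨σ, hσmem, hσ⟩ := hcore.2 ρ hρ (ε / 2) (by positivity)
  obtain ⟨N, φs, ψs, rfl⟩ := hσmem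
  set ε' : ℝ := ε / (4 * (N + 1)) with hε'def
  have hε'pos : 0 < ε' := by positivity
  choose xs ys hxE hyE h3 h4 using fun n => happrox2 (φs n) (ψs n) ε' hε'pos
  have hNε' : (N : ℝ) * ε' ≤ ε / 4 := by
    have hN1 : ((N : ℝ) + 1) ≠ 0 := by positivity
    have h1 : (N : ℝ) * ε' ≤ ((N : ℝ) + 1) * ε' := by
      nlinarith [hε'pos.le, Nat.cast_nonneg (α := ℝ) N]
    have h2 : ((N : ℝ) + 1) * ε' = ε / 4 := by
      rw [hε'def]; field_simp
    linarith
  have hτmem : (∑ n, Mod.rankOne (xs n) (ys n)) ∈ Mod.De2 e := by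
    simp only [TraceClassModel.De2, SetLike.mem_coe]
    exact Submodule.sum_mem _ fun n _ => Mod.rankOne_mem_span e (hxE n) (hyE n)
  refine ⟨∑ n, Mod.rankOne (xs n) (ys n), hτmem, ?_⟩
  have hστ : ‖(∑ n, Mod.rankOne (φs n) (ψs n)) - ∑ n, Mod.rankOne (xs n) (ys n)‖ ≤ ε / 4 := by
    rw [← Finset.sum_sub_distrib]
    refine le_trans (norm_sum_le _ _) (le_trans (Finset.sum_le_sum fun n _ => h3 n) ?_)
    rw [Finset.sum_const, Finset.card_univ, Fintype.card_fin, nsmul_eq_mul]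
    exact hNε'
  have hLστ : ‖G.L (∑ n, Mod.rankOne (φs n) (ψs n))
      - G.L (∑ n, Mod.rankOne (xs n) (ys n))‖ ≤ ε / 4 := by
    rw [(hform N φs ψs).2, (hform N xs ys).2, ← Finset.sum_sub_distrib]
    refine le_trans (norm_sum_le _ _) (le_trans (Finset.sum_le_sum fun n _ => h4 n) ?_)
    rw [Finset.sum_const, Finset.card_univ, Fintype.card_fin, nsmul_eq_mul]
    exact hNε'
  have t1 : ‖ρ - ∑ n, Mod.rankOne (xs n) (ys n)‖ ≤
      ‖ρ - ∑ n, Mod.rankOne (φs n) (ψs n)‖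
      + ‖(∑ n, Mod.rankOne (φs n) (ψs n)) - ∑ n, Mod.rankOne (xs n) (ys n)‖ := by
    have h : ρ - ∑ n, Mod.rankOne (xs n) (ys n) =
        (ρ - ∑ n, Mod.rankOne (φs n) (ψs n))
        + ((∑ n, Mod.rankOne (φs n) (ψs n)) - ∑ n, Mod.rankOne (xs n) (ys n)) := by abel
    rw [h]; exact norm_add_le _ _
  have t2 : ‖G.L ρ - G.L (∑ n, Mod.rankOne (xs n) (ys n))‖ ≤
      ‖G.L ρ - G.L (∑ n, Mod.rankOne (φs n) (ψs n))‖
      + ‖G.L (∑ n, Mod.rankOne (φs n) (ψs n))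
          - G.L (∑ n, Mod.rankOne (xs n) (ys n))‖ := by
    have h : G.L ρ - G.L (∑ n, Mod.rankOne (xs n) (ys n)) =
        (G.L ρ - G.L (∑ n, Mod.rankOne (φs n) (ψs n)))
        + (G.L (∑ n, Mod.rankOne (φs n) (ψs n))
          - G.L (∑ n, Mod.rankOne (xs n) (ys n))) := by abel
    rw [h]; exact norm_add_le _ _
  linarith

end
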